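/- Let V be a commutative artinian local ring with maximal ideal m satisfying m^(m0+1) = 0, of residue characteristic p, and let R be a V-algebra with a ring endomorphism F : R → R that induces the Frobenius on R/mR. Then for every integer e ≥ 0 and every g ∈ R, one has F^e(g^(p^m0)) = g^(p^(m0+e)). -/
import Mathlib

/-- Key step: if `a ≡ b mod I^k` (`k ≥ 1`) and `p ∈ I`, then `a^p ≡ b^p mod I^(k+1)`. -/
lemma aux_pow_step {R : Type*} [CommRing R] (I : Ideal R) (p : ℕ) (hp : p.Prime)
    (hpI : (p : R) ∈ I) (k : ℕ) (hk : 1 ≤ k) {a b : R} (h : a - b ∈ I ^ k) :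
    a ^ p - b ^ p ∈ I ^ (k + 1) := by
  set x := a - b with hx
  have ha : a = b + x := by ring
  have hexp : a ^ p = ∑ i ∈ Finset.range (p + 1), b ^ i * x ^ (p - i) * (p.choose i) := by
    rw [ha, add_pow]
  have hsplit : a ^ p - b ^ p
      = ∑ i ∈ Finset.range p, b ^ i * x ^ (p - i) * (p.choose i) := by
    rw [hexp, Finset.sum_range_succ]
    simp
  rw [hsplit]
  apply Ideal.sum_mem
  intro i hi
  have hi' : i < p := Finset.mem_range.mp hi
  by_cases hip : i = p - 1
  · -- term with a single factor of x, coefficient p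
    subst hip
    have hchoose : (p.choose (p - 1)) = p := by
      rw [Nat.choose_symm (by omega)]; exact Nat.choose_one_right p
    have hpow : p - (p - 1) = 1 := by omega
    rw [hpow, hchoose, pow_one]
    have hmem : x * (p : R) ∈ I ^ k * I := Ideal.mul_mem_mul h hpI
    rw [← pow_succ] at hmem
    have : b ^ (p - 1) * (x * (p : R)) ∈ I ^ (k + 1) := Ideal.mul_mem_left _ _ hmem
    simpa [mul_assoc] using this
  · have h2 : 2 ≤ p - i := by omega
    have hx2 : x ^ (p - i) ∈ I ^ (k * (p - i)) := by
      have := Ideal.pow_mem_pow h (p - i)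
      rwa [← pow_mul] at this
    have hle : I ^ (k * (p - i)) ≤ I ^ (k + 1) :=
      Ideal.pow_le_pow_right (by nlinarith)
    exact Ideal.mul_mem_right _ _ (Ideal.mul_mem_left _ _ (hle hx2))

/-- Iterated version: `a ≡ b mod I` implies `a^(p^n) ≡ b^(p^n) mod I^(n+1)`. -/
lemma aux_pow_iter {R : Type*} [CommRing R] (I : Ideal R) (p : ℕ) (hp : p.Prime)
    (hpI : (p : R) ∈ I) (n : ℕ) {a b : R} (h : a - b ∈ I) :
    a ^ p ^ n - b ^ p ^ n ∈ I ^ (n + 1) := by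
  induction n with
  | zero => simpa using h
  | succ n ih =>
      have := aux_pow_step I p hp hpI (n + 1) (by omega) ih
      rwa [← pow_mul, ← pow_mul, ← pow_succ] at this

/-- If `F : R → R` lifts Frobenius and `m^(m0+1) = 0` in the artinian local base `V`,
then `F^e(g^(p^m0)) = g^(p^(m0+e))` for all `e` and `g`. -/
theorem stmt1 (V R : Type*) [CommRing V] [IsLocalRing V] [IsArtinianRing V]
    [CommRing R] [Algebra V R]
    (p m0 : ℕ) (hp : p.Prime) (hpm : (p : V) ∈ IsLocalRing.maximalIdeal V)
    (hm : IsLocalRing.maximalIdeal V ^ (m0 + 1) = ⊥)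
    (F : R →+* R)
    (hF : ∀ g : R, F g - g ^ p ∈ Ideal.map (algebraMap V R) (IsLocalRing.maximalIdeal V)) :
    ∀ (e : ℕ) (g : R), (⇑F)^[e] (g ^ p ^ m0) = g ^ p ^ (m0 + e) := by
  set M : Ideal R := Ideal.map (algebraMap V R) (IsLocalRing.maximalIdeal V) with hM
  have hpM : (p : R) ∈ M := by
    have : algebraMap V R (p : V) ∈ M := Ideal.mem_map_of_mem _ hpm
    simpa using this
  have hMtop : M ^ (m0 + 1) = ⊥ := by
    rw [hM, ← Ideal.map_pow, hm, Ideal.map_bot]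
  -- F^e g ≡ g^(p^e) mod M
  have key : ∀ (e : ℕ) (g : R), (⇑F)^[e] g - g ^ p ^ e ∈ M := by
    intro e
    induction e with
    | zero => intro g; simp
    | succ e ih =>
        intro g
        have h1 : F ((⇑F)^[e] g) - ((⇑F)^[e] g) ^ p ∈ M := hF _
        have h2 : ((⇑F)^[e] g) ^ p - (g ^ p ^ e) ^ p ∈ M ^ 2 :=
          aux_pow_step M p hp hpM 1 le_rfl (by simpa using ih g)
        have h2' : ((⇑F)^[e] g) ^ p - (g ^ p ^ e) ^ p ∈ M :=
          Ideal.pow_le_self (by norm_num) h2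
        have := Ideal.add_mem _ h1 h2'
        rw [Function.iterate_succ_apply']
        rw [← pow_mul, ← pow_succ] at this
        simpa using this
  intro e g
  have h1 : (⇑F)^[e] (g ^ p ^ m0) = ((⇑F)^[e] g) ^ p ^ m0 := by
    induction e with
    | zero => simp
    | succ e ih => rw [Function.iterate_succ_apply', Function.iterate_succ_apply', ih, map_pow]
  rw [h1]
  have h2 : ((⇑F)^[e] g) ^ p ^ m0 - (g ^ p ^ e) ^ p ^ m0 ∈ M ^ (m0 + 1) :=
    aux_pow_iter M p hp hpM m0 (key e g)
  rw [hMtop, Ideal.mem_bot, sub_eq_zero] at h2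
  rw [h2, ← pow_mul, ← pow_add, Nat.add_comm e m0]
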